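/- Let x_1, …, x_m ∈ ℝ^d, let y_1, …, y_m ∈ {0,1} with ∑_{i=1}^m y_i ≤ 1, and define the per-round MNL loss f(θ) = −∑_{i=1}^m y_i x_iᵀθ + log(1 + ∑_{j=1}^m exp(x_jᵀθ)) and its gradient G(θ) = ∑_{i=1}^m (p_i(θ) − y_i) x_i. Suppose κ > 0 is such that p_i(θ) p_0(θ) ≥ κ for every i = 1,…,m and every θ on the line segment between θ₁ and θ₂. Then f(θ₂) ≥ f(θ₁) + G(θ₁)ᵀ(θ₂ − θ₁) + (κ/2) (θ₂ − θ₁)ᵀ (∑_{i=1}^m x_i x_iᵀ) (θ₂ − θ₁). -/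

import Mathlib

set_option maxHeartbeats 1000000


open Matrix

/-- MNL choice probability of item `i`. -/
noncomputable def mnlProb {d m : ℕ} (x : Fin m → Fin d → ℝ) (θ : Fin d → ℝ)
    (i : Fin m) : ℝ :=
  Real.exp (x i ⬝ᵥ θ) / (1 + ∑ j, Real.exp (x j ⬝ᵥ θ))

/-- MNL outside-option probability. -/
noncomputable def mnlProb0 {d m : ℕ} (x : Fin m → Fin d → ℝ) (θ : Fin d → ℝ) : ℝ :=
  1 / (1 + ∑ j, Real.exp (x j ⬝ᵥ θ))

/-- Per-round MNL negative log-likelihood. -/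
noncomputable def mnlLoss {d m : ℕ} (x : Fin m → Fin d → ℝ) (y : Fin m → ℝ)
    (θ : Fin d → ℝ) : ℝ :=
  -∑ i, y i * (x i ⬝ᵥ θ) + Real.log (1 + ∑ j, Real.exp (x j ⬝ᵥ θ))

/-- Gradient of the per-round MNL loss. -/
noncomputable def mnlGrad {d m : ℕ} (x : Fin m → Fin d → ℝ) (y : Fin m → ℝ)
    (θ : Fin d → ℝ) : Fin d → ℝ :=
  ∑ i, (mnlProb x θ i - y i) • x i

/-- Second-order Taylor lower bound from a lower bound on the second derivative. -/
lemma taylor_lb (g g' G : ℝ → ℝ) (c : ℝ)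
    (hg : ∀ t, HasDerivAt g (g' t) t)
    (hg' : ∀ t, HasDerivAt g' (G t) t)
    (hG : ∀ t ∈ Set.Icc (0:ℝ) 1, c ≤ G t) :
    g 0 + g' 0 + c / 2 ≤ g 1 := by
  set h' : ℝ → ℝ := fun t => g' t - g' 0 - c * t with hh'_def
  set h : ℝ → ℝ := fun t => g t - g' 0 * t - c / 2 * t ^ 2 with hh_def
  have hdh' : ∀ t, HasDerivAt h' (G t - c) t := by
    intro t
    have := ((hg' t).sub_const (g' 0)).fun_sub ((hasDerivAt_id t).const_mul c)
    simpa [hh'_def, mul_comm] using this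
  have hdh : ∀ t, HasDerivAt h (h' t) t := by
    intro t
    have h1 : HasDerivAt (fun t : ℝ => g' 0 * t) (g' 0) t := by
      simpa using (hasDerivAt_id t).const_mul (g' 0)
    have h2 : HasDerivAt (fun t : ℝ => c / 2 * t ^ 2) (c * t) t := by
      have := (hasDerivAt_pow 2 t).const_mul (c / 2)
      exact this.congr_deriv (by push_cast; ring)
    have := ((hg t).fun_sub h1).fun_sub h2
    simpa [hh'_def, hh_def] using this
  have mono1 : MonotoneOn h' (Set.Icc 0 1) := by
    apply monotoneOn_of_deriv_nonneg (convex_Icc 0 1)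
    · exact fun t _ => (hdh' t).continuousAt.continuousWithinAt
    · exact fun t _ => (hdh' t).differentiableAt.differentiableWithinAt
    · intro t ht
      rw [interior_Icc] at ht
      rw [(hdh' t).deriv]
      have := hG t ⟨le_of_lt ht.1, le_of_lt ht.2⟩
      linarith
  have h'0 : h' 0 = 0 := by simp [hh'_def]
  have h'nonneg : ∀ t ∈ Set.Icc (0:ℝ) 1, 0 ≤ h' t := by
    intro t ht
    have := mono1 (Set.left_mem_Icc.2 one_pos.le) ht ht.1
    rw [h'0] at this; exact this
  have mono2 : MonotoneOn h (Set.Icc 0 1) := by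
    apply monotoneOn_of_deriv_nonneg (convex_Icc 0 1)
    · exact fun t _ => (hdh t).continuousAt.continuousWithinAt
    · exact fun t _ => (hdh t).differentiableAt.differentiableWithinAt
    · intro t ht
      rw [interior_Icc] at ht
      rw [(hdh t).deriv]
      exact h'nonneg t ⟨le_of_lt ht.1, le_of_lt ht.2⟩
  have := mono2 (Set.left_mem_Icc.2 one_pos.le) (Set.right_mem_Icc.2 one_pos.le) zero_le_one
  simp only [hh_def] at this
  nlinarith [this]

lemma sum_dotProduct' {d m : ℕ} (f : Fin m → Fin d → ℝ) (v : Fin d → ℝ) :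
    (∑ i, f i) ⬝ᵥ v = ∑ i, f i ⬝ᵥ v := by
  simp only [dotProduct, Finset.sum_apply, Finset.sum_mul]
  exact Finset.sum_comm

lemma quad_eq {d m : ℕ} (x : Fin m → Fin d → ℝ) (v : Fin d → ℝ) :
    v ⬝ᵥ (∑ i, vecMulVec (x i) (x i)) *ᵥ v = ∑ i, (x i ⬝ᵥ v) ^ 2 := by
  have h1 : ∀ (u w : Fin d → ℝ), vecMulVec u u *ᵥ w = (u ⬝ᵥ w) • u := by
    intro u w; funext k
    simp only [Matrix.mulVec, dotProduct, vecMulVec_apply, Pi.smul_apply,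
      smul_eq_mul, Finset.sum_mul, Finset.mul_sum]
    exact Finset.sum_congr rfl fun l _ => by ring
  have h2 : (∑ i, vecMulVec (x i) (x i)) *ᵥ v = ∑ i, (x i ⬝ᵥ v) • x i := by
    funext k
    simp only [Matrix.mulVec, dotProduct, Matrix.sum_apply, Finset.sum_apply,
      Finset.sum_mul, vecMulVec_apply]
    rw [Finset.sum_comm]
    refine Finset.sum_congr rfl fun i _ => ?_
    simp only [Pi.smul_apply, smul_eq_mul, Finset.sum_mul]
    exact Finset.sum_congr rfl fun l _ => by ring
  rw [h2]
  simp only [dotProduct, Finset.sum_apply, Pi.smul_apply, smul_eq_mul,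
    Finset.mul_sum]
  rw [Finset.sum_comm]
  refine Finset.sum_congr rfl fun i _ => ?_
  rw [sq, Finset.sum_mul]
  refine Finset.sum_congr rfl fun k _ => ?_
  ring

/-- Strong-convexity (second-order Taylor) lower bound for the per-round MNL loss:
`f(θ₂) ≥ f(θ₁) + G(θ₁)ᵀ(θ₂−θ₁) + (κ/2)(θ₂−θ₁)ᵀ(∑ᵢ xᵢxᵢᵀ)(θ₂−θ₁)`
when `pᵢ(θ)p₀(θ) ≥ κ` on the segment between `θ₁` and `θ₂`. -/
theorem stmt10 {d m : ℕ} (x : Fin m → Fin d → ℝ) (y : Fin m → ℝ)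
    (hy : ∀ i, y i = 0 ∨ y i = 1) (hy1 : ∑ i, y i ≤ 1)
    (κ : ℝ) (hκ : 0 < κ) (θ₁ θ₂ : Fin d → ℝ)
    (hseg : ∀ θ ∈ segment ℝ θ₁ θ₂, ∀ i, κ ≤ mnlProb x θ i * mnlProb0 x θ) :
    mnlLoss x y θ₁ + mnlGrad x y θ₁ ⬝ᵥ (θ₂ - θ₁)
        + κ / 2 * ((θ₂ - θ₁) ⬝ᵥ (∑ i, vecMulVec (x i) (x i)) *ᵥ (θ₂ - θ₁))
      ≤ mnlLoss x y θ₂ := by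
  set v : Fin d → ℝ := θ₂ - θ₁ with hv
  set a : Fin m → ℝ := fun i => x i ⬝ᵥ v with ha
  set b : Fin m → ℝ := fun i => x i ⬝ᵥ θ₁ with hb
  set e : ℝ → Fin m → ℝ := fun t j => Real.exp (b j + t * a j) with he
  set S : ℝ → ℝ := fun t => 1 + ∑ j, e t j with hS
  set A : ℝ → ℝ := fun t => ∑ j, a j * e t j with hA
  set B : ℝ → ℝ := fun t => ∑ j, a j ^ 2 * e t j with hB
  set g : ℝ → ℝ := fun t => -∑ i, y i * (b i + t * a i) + Real.log (S t) with hg_def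
  set g' : ℝ → ℝ := fun t => -∑ i, y i * a i + A t / S t with hg'_def
  set G : ℝ → ℝ := fun t => (B t * S t - A t ^ 2) / S t ^ 2 with hG_def
  have hSpos : ∀ t, 0 < S t := by
    intro t
    have : (0:ℝ) ≤ ∑ j, e t j := Finset.sum_nonneg fun j _ => (Real.exp_pos _).le
    simp only [hS]; linarith
  have hdS : ∀ t, HasDerivAt S (A t) t := by
    intro t
    refine HasDerivAt.const_add 1 ?_
    refine HasDerivAt.fun_sum fun j _ => ?_
    have h : HasDerivAt (fun t : ℝ => b j + t * a j) (a j) t := by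
      simpa using ((hasDerivAt_id t).mul_const (a j)).const_add (b j)
    simpa [he, mul_comm] using h.exp
  have hdA : ∀ t, HasDerivAt A (B t) t := by
    intro t
    refine HasDerivAt.fun_sum fun j _ => ?_
    have h : HasDerivAt (fun t : ℝ => b j + t * a j) (a j) t := by
      simpa using ((hasDerivAt_id t).mul_const (a j)).const_add (b j)
    have := h.exp.const_mul (a j)
    exact this.congr_deriv (by simp only [he]; ring)
  have hdg : ∀ t, HasDerivAt g (g' t) t := by
    intro t
    have h1 : HasDerivAt (fun t : ℝ => -∑ i, y i * (b i + t * a i))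
        (-∑ i, y i * a i) t := by
      refine HasDerivAt.neg ?_
      refine HasDerivAt.fun_sum fun i _ => ?_
      have h : HasDerivAt (fun t : ℝ => b i + t * a i) (a i) t := by
        simpa using ((hasDerivAt_id t).mul_const (a i)).const_add (b i)
      simpa using h.const_mul (y i)
    have h2 : HasDerivAt (fun t => Real.log (S t)) (A t / S t) t :=
      (hdS t).log (hSpos t).ne'
    exact h1.add h2
  have hdg' : ∀ t, HasDerivAt g' (G t) t := by
    intro t
    have h2 : HasDerivAt (fun t => A t / S t)
        ((B t * S t - A t * A t) / S t ^ 2) t :=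
      (hdA t).div (hdS t) (hSpos t).ne'
    have := h2.const_add (-∑ i, y i * a i)
    exact this.congr_deriv (by simp only [hG_def]; ring)
  have hGlb : ∀ t ∈ Set.Icc (0:ℝ) 1, κ * ∑ i, a i ^ 2 ≤ G t := by
    intro t ht
    have hmem : θ₁ + t • v ∈ segment ℝ θ₁ θ₂ := by
      rw [segment_eq_image']
      exact ⟨t, ht, rfl⟩
    have hxd : ∀ j, x j ⬝ᵥ (θ₁ + t • v) = b j + t * a j := by
      intro j
      simp [dotProduct_add, dotProduct_smul, hb, ha, smul_eq_mul]
    have hkey : ∀ i, κ * S t ^ 2 ≤ e t i := by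
      intro i
      have h := hseg _ hmem i
      rw [mnlProb, mnlProb0] at h
      have hsum : (1 + ∑ j, Real.exp (x j ⬝ᵥ (θ₁ + t • v))) = S t := by
        simp only [hS, he]
        congr 1
        exact Finset.sum_congr rfl fun j _ => by rw [hxd j]
      rw [hsum, hxd i] at h
      have hS2 : (0:ℝ) < S t ^ 2 := pow_pos (hSpos t) 2
      have : κ ≤ e t i / S t ^ 2 := by
        have : Real.exp (b i + t * a i) / S t * (1 / S t)
            = e t i / S t ^ 2 := by
          rw [he]; field_simp
        linarith [h, this.symm.le, this.le]
      calc κ * S t ^ 2 ≤ e t i / S t ^ 2 * S t ^ 2 := by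
            exact mul_le_mul_of_nonneg_right this hS2.le
        _ = e t i := div_mul_cancel₀ _ hS2.ne'
    have hBlb : κ * S t ^ 2 * ∑ i, a i ^ 2 ≤ B t := by
      rw [Finset.mul_sum, hB]
      refine Finset.sum_le_sum fun i _ => ?_
      have := mul_le_mul_of_nonneg_left (hkey i) (sq_nonneg (a i))
      linarith [this]
    have hCS : A t ^ 2 ≤ B t * (S t - 1) := by
      have h1 : A t = ∑ j, (a j * Real.sqrt (e t j)) * Real.sqrt (e t j) := by
        refine Finset.sum_congr rfl fun j _ => ?_
        rw [mul_assoc, Real.mul_self_sqrt (Real.exp_nonneg _)]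
      have h2 := Finset.sum_mul_sq_le_sq_mul_sq Finset.univ
        (fun j => a j * Real.sqrt (e t j)) (fun j => Real.sqrt (e t j))
      have h3 : ∀ j, (a j * Real.sqrt (e t j)) ^ 2 = a j ^ 2 * e t j := by
        intro j
        rw [mul_pow, Real.sq_sqrt (Real.exp_nonneg _)]
      have h4 : ∀ j : Fin m, Real.sqrt (e t j) ^ 2 = e t j := by
        intro j; rw [Real.sq_sqrt (Real.exp_nonneg _)]
      rw [h1]
      calc (∑ j, (a j * Real.sqrt (e t j)) * Real.sqrt (e t j)) ^ 2
          ≤ (∑ j, (a j * Real.sqrt (e t j)) ^ 2) * ∑ j, Real.sqrt (e t j) ^ 2 := h2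
        _ = B t * (S t - 1) := by
            simp only [hB]
            congr 1
            · exact Finset.sum_congr rfl fun j _ => h3 j
            · simp only [hS]
              rw [Finset.sum_congr rfl fun j _ => h4 j]
              ring
    have hS2 : (0:ℝ) < S t ^ 2 := pow_pos (hSpos t) 2
    rw [hG_def, le_div_iff₀ hS2]
    nlinarith [hBlb, hCS, hSpos t]
  have key := taylor_lb g g' G (κ * ∑ i, a i ^ 2) hdg hdg' hGlb
  have e1 : mnlLoss x y θ₁ = g 0 := by
    simp [mnlLoss, hg_def, hS, he, hb]
  have e2 : mnlLoss x y θ₂ = g 1 := by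
    have hx2 : ∀ j, x j ⬝ᵥ θ₂ = b j + 1 * a j := by
      intro j
      simp [hb, ha, hv, dotProduct_sub]
    simp only [mnlLoss, hg_def, hS, he]
    congr 1
    · congr 1
      exact Finset.sum_congr rfl fun i _ => by rw [hx2 i]
    · congr 1
      congr 1
      exact Finset.sum_congr rfl fun j _ => by rw [hx2 j]
  have e3 : mnlGrad x y θ₁ ⬝ᵥ v = g' 0 := by
    rw [mnlGrad, sum_dotProduct']
    have : ∀ i : Fin m, ((mnlProb x θ₁ i - y i) • x i) ⬝ᵥ v
        = (e 0 i / S 0 - y i) * a i := by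
      intro i
      rw [smul_dotProduct, smul_eq_mul,
        show x i ⬝ᵥ v = a i from rfl]
      congr 2
      rw [mnlProb]
      simp [he, hS, hb]
    rw [Finset.sum_congr rfl fun i _ => this i]
    have hsum : ∑ i, (e 0 i / S 0 - y i) * a i
        = A 0 / S 0 - ∑ i, y i * a i := by
      simp only [sub_mul, Finset.sum_sub_distrib]
      congr 1
      rw [hA, Finset.sum_div]
      exact Finset.sum_congr rfl fun i _ => by ring
    rw [hsum, hg'_def]
    ring
  have e4 : v ⬝ᵥ (∑ i, vecMulVec (x i) (x i)) *ᵥ v = ∑ i, a i ^ 2 := quad_eq x v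
  rw [e1, e2, e3, e4]
  linarith [key]
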